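/- In the Artin group A(3,3,3) = ⟨s, t, r | sts = tst, trt = rtr, srs = rsr⟩, for every k ≥ 1 and all nonzero integers n_1, …, n_k, the element strstr commutes with the element (t^{n_1} s t r)(t^{n_2} s t r) ⋯ (t^{n_k} s t r). In particular, for each such product w, the subgroup ⟨strstr, w⟩ of A(3,3,3) is abelian. -/

import Mathlib

namespace A333

/-- The defining relations of the Artin group
`A(3,3,3) = ⟨s, t, r | sts = tst, trt = rtr, srs = rsr⟩`,
with `0, 1, 2` playing the roles of `s, t, r`. -/
def rels : Set (FreeGroup (Fin 3)) :=
  { FreeGroup.of 0 * FreeGroup.of 1 * FreeGroup.of 0 *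
      (FreeGroup.of 1 * FreeGroup.of 0 * FreeGroup.of 1)⁻¹,
    FreeGroup.of 1 * FreeGroup.of 2 * FreeGroup.of 1 *
      (FreeGroup.of 2 * FreeGroup.of 1 * FreeGroup.of 2)⁻¹,
    FreeGroup.of 0 * FreeGroup.of 2 * FreeGroup.of 0 *
      (FreeGroup.of 2 * FreeGroup.of 0 * FreeGroup.of 2)⁻¹ }

/-- The Artin group `A(3,3,3)`. -/
abbrev Grp := PresentedGroup rels

def s : Grp := PresentedGroup.of 0
def t : Grp := PresentedGroup.of 1
def r : Grp := PresentedGroup.of 2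

lemma rel_of_mem {w : FreeGroup (Fin 3)} (hw : w ∈ rels) :
    PresentedGroup.mk rels w = 1 :=
  (QuotientGroup.eq_one_iff _).mpr (Subgroup.subset_normalClosure hw)

lemma mk_of (i : Fin 3) : PresentedGroup.mk rels (FreeGroup.of i) = PresentedGroup.of i := rfl

lemma rel_st : s * t * s = t * s * t := by
  have h := rel_of_mem (w := FreeGroup.of 0 * FreeGroup.of 1 * FreeGroup.of 0 *
      (FreeGroup.of 1 * FreeGroup.of 0 * FreeGroup.of 1)⁻¹) (by simp [rels])
  simp only [map_mul, map_inv, mk_of, mul_inv_eq_one] at h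
  exact h

lemma rel_tr : t * r * t = r * t * r := by
  have h := rel_of_mem (w := FreeGroup.of 1 * FreeGroup.of 2 * FreeGroup.of 1 *
      (FreeGroup.of 2 * FreeGroup.of 1 * FreeGroup.of 2)⁻¹) (by simp [rels])
  simp only [map_mul, map_inv, mk_of, mul_inv_eq_one] at h
  exact h

lemma rel_sr : s * r * s = r * s * r := by
  have h := rel_of_mem (w := FreeGroup.of 0 * FreeGroup.of 2 * FreeGroup.of 0 *
      (FreeGroup.of 2 * FreeGroup.of 0 * FreeGroup.of 2)⁻¹) (by simp [rels])
  simp only [map_mul, map_inv, mk_of, mul_inv_eq_one] at h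
  exact h

lemma rel_tr' : t * (r * t) = r * (t * r) := by
  simpa [mul_assoc] using rel_tr

lemma rel_sr' (x : Grp) : r * (s * (r * x)) = s * (r * (s * x)) := by
  have : r * s * r * x = s * r * s * x := by rw [← rel_sr]
  simpa [mul_assoc] using this

lemma rel_st' (x : Grp) : s * (t * (s * x)) = t * (s * (t * x)) := by
  have : s * t * s * x = t * s * t * x := by rw [rel_st]
  simpa [mul_assoc] using this

/-- `strstr` commutes with `t`. -/
lemma comm_t : Commute (s * t * r * s * t * r) t := by
  show s * t * r * s * t * r * t = t * (s * t * r * s * t * r)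
  simp only [mul_assoc]
  rw [rel_tr', rel_sr', rel_st']

/-- `strstr` commutes with `str`. -/
lemma comm_str : Commute (s * t * r * s * t * r) (s * (t * r)) := by
  have : s * t * r * s * t * r = (s * (t * r)) * (s * (t * r)) := by
    simp [mul_assoc]
  rw [this]
  exact Commute.mul_left (Commute.refl _) (Commute.refl _)

/-- If two elements commute, the subgroup they generate is commutative. -/
lemma closure_pair_isCommutative {G : Type*} [Group G] {a b : G} (h : Commute a b) :
    IsMulCommutative (Subgroup.closure {a, b}) := by
  constructor
  constructor
  rintro ⟨x, hx⟩ ⟨y, hy⟩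
  have hcent : Subgroup.closure {a, b} ≤ Subgroup.centralizer {a, b} := by
    rw [Subgroup.closure_le]
    rintro g (rfl | rfl) <;> simp only [SetLike.mem_coe, Subgroup.mem_centralizer_iff] <;>
      rintro c (rfl | rfl) <;> first | rfl | exact h.symm | exact h
  have hy' : y ∈ Subgroup.centralizer {a, b} := hcent hy
  have hxy : x ∈ Subgroup.centralizer {y} := by
    have : Subgroup.closure {a, b} ≤ Subgroup.centralizer {y} := by
      rw [Subgroup.closure_le]
      rintro g (rfl | rfl) <;> simp only [SetLike.mem_coe, Subgroup.mem_centralizer_iff] <;>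
        rintro c rfl
      · exact (hy' g (by simp)).symm
      · exact (hy' g (by simp)).symm
    exact this hx
  have := hxy y (by simp)
  exact Subtype.ext this.symm

end A333

open A333 in
/-- In `A(3,3,3)`, the element `strstr` commutes with every product
`(t^{n₁}str)(t^{n₂}str)⋯(t^{n_k}str)` with all `nᵢ` nonzero; in particular the
subgroup generated by `strstr` and such a product is abelian. -/
theorem A333_strstr_commutes (k : ℕ) (hk : 1 ≤ k) (n : Fin k → ℤ) (hn : ∀ p, n p ≠ 0) :
    Commute (s * t * r * s * t * r)
      (((List.finRange k).map fun p => t ^ n p * s * t * r).prod) ∧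
    IsMulCommutative (Subgroup.closure {s * t * r * s * t * r,
      ((List.finRange k).map fun p => t ^ n p * s * t * r).prod}) := by
  have hcomm : Commute (s * t * r * s * t * r)
      (((List.finRange k).map fun p => t ^ n p * s * t * r).prod) := by
    apply Commute.list_prod_right
    intro x hx
    simp only [List.mem_map] at hx
    obtain ⟨p, -, rfl⟩ := hx
    have h1 : Commute (s * t * r * s * t * r) (t ^ n p) := comm_t.zpow_right _
    have h2 : Commute (s * t * r * s * t * r) (t ^ n p * (s * (t * r))) :=
      h1.mul_right comm_str
    simpa [mul_assoc] using h2
  exact ⟨hcomm, closure_pair_isCommutative hcomm⟩
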